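/- arXiv:1111.4705 — 5 statements merged into one kernel-verified Lean document; each statement's English description precedes it below -/
import Mathlib

section
/- The dual space decomposes as an internal direct sum V* = im ω♭ ⊕ ℝ·α, where im ω♭ = {ω(v, ·) : v ∈ V} (the pointwise version of Lemma 2.1(1): T*M = im(dα)♭ ⊕ ⟨α⟩). -/
lemma dual_decomp_surj_aux {D : Type*} [AddCommGroup D] [Module ℝ D]
    [FiniteDimensional ℝ D] (Φ : D →ₗ[ℝ] (D →ₗ[ℝ] ℝ))
    (h : Function.Injective Φ) : Function.Surjective Φ :=
  (LinearMap.injective_iff_surjective_of_finrank_eq_finrank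
    (Subspace.dual_finrank_eq (V := D)).symm).mp h

/-- The dual space decomposes as an internal direct sum `V* = im ω♭ ⊕ ℝ·α`. -/
theorem dual_decomposition
    (V : Type*) [AddCommGroup V] [Module ℝ V] [FiniteDimensional ℝ V]
    (α : V →ₗ[ℝ] ℝ) (hα : α ≠ 0)
    (ω : V →ₗ[ℝ] V →ₗ[ℝ] ℝ) (hωalt : ∀ v : V, ω v v = 0)
    (hnd : ∀ v ∈ LinearMap.ker α, (∀ w ∈ LinearMap.ker α, ω v w = 0) → v = 0) :
    IsCompl (LinearMap.range ω) (Submodule.span ℝ {α}) := by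
  set D := LinearMap.ker α with hD
  -- antisymmetry
  have hskew : ∀ v w : V, ω v w = - ω w v := by
    intro v w
    have h := hωalt (v + w)
    simp only [map_add, LinearMap.add_apply, hωalt] at h
    linarith
  -- restriction map
  set Φ : D →ₗ[ℝ] (D →ₗ[ℝ] ℝ) := ((ω.compl₂ D.subtype).domRestrict D) with hΦ
  have hΦapp : ∀ (d w : D), Φ d w = ω d w := fun d w => rfl
  have hΦinj : Function.Injective Φ := by
    rw [← LinearMap.ker_eq_bot, LinearMap.ker_eq_bot']
    intro d hd
    have : (d : V) = 0 := by
      refine hnd d d.2 fun w hw => ?_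
      have := congrArg (fun f => f ⟨w, hw⟩) hd
      simpa [hΦapp] using this
    exact Subtype.ext this
  have hΦsurj := dual_decomp_surj_aux Φ hΦinj
  -- element with α e = 1
  obtain ⟨v₀, hv₀⟩ : ∃ v, α v ≠ 0 := by
    by_contra h
    push_neg at h
    exact hα (LinearMap.ext fun v => by simp [h v])
  set e : V := (α v₀)⁻¹ • v₀ with he
  have hαe : α e = 1 := by simp [he, inv_mul_cancel₀ hv₀]
  -- Reeb vector: R with α R = 1 and ω R w = 0 for w ∈ D
  obtain ⟨d₀, hd₀⟩ := hΦsurj ((ω.compl₂ D.subtype) e)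
  set R : V := e - d₀ with hR
  have hαR : α R = 1 := by
    have : α (d₀ : V) = 0 := d₀.2
    simp [hR, hαe, this]
  have hωR : ∀ w ∈ D, ω R w = 0 := by
    intro w hw
    have := congrArg (fun f => f ⟨w, hw⟩) hd₀
    simp only [hΦapp] at this
    simp only [hR, map_sub, LinearMap.sub_apply]
    have : ω (d₀ : V) w = ω e w := this
    rw [this]; ring
  -- decomposition of arbitrary v : V as d + t • R with d ∈ D
  have hdecomp : ∀ v : V, ∃ d ∈ D, v = d + (α v) • R := by
    intro v
    refine ⟨v - (α v) • R, ?_, by abel⟩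
    simp [hD, LinearMap.mem_ker, hαR]
  constructor
  · -- disjoint
    rw [disjoint_iff_inf_le]
    rintro f ⟨⟨v, rfl⟩, hf2⟩
    obtain ⟨c, hc⟩ := Submodule.mem_span_singleton.mp hf2
    obtain ⟨d, hd, hv⟩ := hdecomp v
    -- ω v w = c * α w for all w; for w ∈ D: ω d w = ω v w = 0
    have hωv : ∀ w, ω v w = c * α w := by
      intro w
      have := congrArg (fun f => f w) hc
      simpa using this.symm
    have hd0 : d = 0 := by
      refine hnd d hd fun w hw => ?_
      have h1 : ω v w = 0 := by rw [hωv]; simp [(LinearMap.mem_ker).mp hw]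
      have : ω d w + α v * ω R w = 0 := by
        have := h1
        rw [hv] at this
        simpa [map_add, LinearMap.add_apply, map_smul, smul_eq_mul] using this
      rw [hωR w hw] at this
      linarith
    have hc0 : c = 0 := by
      have h1 := hωv R
      rw [hv, hd0] at h1
      simp only [zero_add, map_smul, LinearMap.smul_apply, smul_eq_mul, hωalt, hαR,
        mul_one] at h1
      linarith
    simp only [hc0, zero_smul] at hc
    simp [← hc]
  · -- codisjoint
    rw [codisjoint_iff_le_sup]
    intro f _
    set c : ℝ := f R with hcdef
    set g : V →ₗ[ℝ] ℝ := f - c • α with hg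
    have hgR : g R = 0 := by simp [hg, hαR]; exact sub_eq_zero.mpr hcdef.symm
    obtain ⟨d, hd⟩ := hΦsurj ((g.comp D.subtype))
    have hdg : ∀ w ∈ D, ω d w = g w := by
      intro w hw
      have := congrArg (fun f => f ⟨w, hw⟩) hd
      simpa [hΦapp] using this
    have hωdg : ω (d : V) = g := by
      apply LinearMap.ext
      intro v
      obtain ⟨w, hw, hv⟩ := hdecomp v
      have hωdR : ω (d : V) R = 0 := by
        rw [hskew]
        rw [hωR d d.2]; ring
      rw [hv]
      simp only [map_add, LinearMap.add_apply, map_smul, LinearMap.smul_apply, smul_eq_mul]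
      rw [hdg w hw, hωdR, hgR]
    have : f = ω (d : V) + c • α := by
      rw [hωdg, hg]; abel
    rw [this]
    exact Submodule.add_mem_sup (LinearMap.mem_range_self ω (d : V))
      (Submodule.smul_mem _ c (Submodule.mem_span_singleton_self α))
end

section
/- The alternating bilinear form Ω on ℝ × V defined by Ω((s, v), (s', v')) := s·α(v') − s'·α(v) + ω(v, v') is nondegenerate. (This is the pointwise linear-algebra content of the symplectization of Section 4: the 2-form d(e^t α) = e^t(dt∧α + dα) on M × ℝ is a symplectic form.) -/
/-- Pointwise symplectization: the form
`Ω((s,v),(s',v')) = s·α(v') - s'·α(v) + ω(v,v')` on `ℝ × V` is nondegenerate. -/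
theorem symplectization_nondegenerate
    (V : Type*) [AddCommGroup V] [Module ℝ V] [FiniteDimensional ℝ V]
    (α : V →ₗ[ℝ] ℝ) (hα : α ≠ 0)
    (ω : V →ₗ[ℝ] V →ₗ[ℝ] ℝ) (hωalt : ∀ v : V, ω v v = 0)
    (hnd : ∀ v ∈ LinearMap.ker α, (∀ w ∈ LinearMap.ker α, ω v w = 0) → v = 0) :
    ∀ p : ℝ × V, (∀ q : ℝ × V, p.1 * α q.2 - q.1 * α p.2 + ω p.2 q.2 = 0) → p = 0 := by
  rintro ⟨s, v⟩ h
  have hv : α v = 0 := by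
    have := h (1, 0)
    simpa using this
  have hvker : v ∈ LinearMap.ker α := hv
  have hv0 : v = 0 := by
    refine hnd v hvker fun w hw => ?_
    have := h (0, w)
    have hw' : α w = 0 := hw
    simp [hw', hv] at this
    exact this
  subst hv0
  obtain ⟨w, hw⟩ : ∃ w, α w ≠ 0 := by
    by_contra hcon
    push_neg at hcon
    exact hα (LinearMap.ext fun w => by simpa using hcon w)
  have := h (0, w)
  simp [hv] at this
  have hs : s = 0 := by
    rcases this with h1 | h2
    · exact h1
    · exact absurd h2 hw
  simp [hs]
end

section
/- Suppose Λ and R satisfy the Jacobi structure equations (i) Λ(Λ(f,g),h) + Λ(Λ(g,h),f) + Λ(Λ(h,f),g) = R(f)·Λ(g,h) + R(g)·Λ(h,f) + R(h)·Λ(f,g) for all f, g, h ∈ A, and (ii) R(Λ(f,g)) = Λ(R(f),g) + Λ(f,R(g)) for all f, g ∈ A. Then the Jacobi bracket {f,g} = Λ(f,g) + f·R(g) − g·R(f) satisfies the Jacobi identity {f,{g,h}} + {g,{h,f}} + {h,{f,g}} = 0 for all f, g, h, so that (A, {·,·}) is a real Lie algebra. (This is the bracket-level content of the direction of Proposition 3.3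 and Theorem 3.4 associating a Lie bracket on functions to a Jacobi structure (Λ, R) with [Λ,Λ] = 2RΛ and [R,Λ] = 0.) -/
/-- If `(Λ, R)` satisfies the Jacobi structure equations, then the Jacobi
bracket `{f,g} = Λ(f,g) + f·R(g) − g·R(f)` satisfies the Jacobi identity,
so `(A, {·,·})` is a real Lie algebra. -/
theorem jacobi_structure_gives_lie_bracket
    (A : Type*) [CommRing A] [Algebra ℝ A]
    (Λ : A →ₗ[ℝ] A →ₗ[ℝ] A) (hΛ0 : ∀ f : A, Λ f f = 0)
    (hΛd : ∀ f g h : A, Λ f (g * h) = g * Λ f h + h * Λ f g)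
    (R : A →ₗ[ℝ] A) (hR : ∀ f g : A, R (f * g) = f * R g + g * R f)
    (h1 : ∀ f g h : A,
      Λ (Λ f g) h + Λ (Λ g h) f + Λ (Λ h f) g =
        R f * Λ g h + R g * Λ h f + R h * Λ f g)
    (h2 : ∀ f g : A, R (Λ f g) = Λ (R f) g + Λ f (R g))
    (J : A → A → A) (hJ : ∀ f g : A, J f g = Λ f g + f * R g - g * R f) :
    (∀ f : A, J f f = 0) ∧
    ∀ f g h : A, J f (J g h) + J g (J h f) + J h (J f g) = 0 := by
  have hA : ∀ a b : A, Λ a b + Λ b a = 0 := by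
    intro a b
    have h := hΛ0 (a + b)
    simp only [map_add, LinearMap.add_apply, hΛ0] at h
    linear_combination h
  constructor
  · intro f
    rw [hJ, hΛ0]; ring
  · intro f g h
    simp only [hJ, map_add, map_sub, LinearMap.add_apply, LinearMap.sub_apply,
      hΛd, hR, h2]
    linear_combination (-1 : A) * h1 f g h + hA f (Λ g h) + hA g (Λ h f)
      + hA h (Λ f g) - R f * hA g h - R g * hA h f - R h * hA f g
      + f * hA (R g) h + g * hA (R h) f + h * hA (R f) g
end

section
/- The Poissonization bracket {·,·}_P on the Laurent polynomial ring A[u,u⁻¹] is alternating and is a derivation in each argument; moreover, {·,·}_P satisfies the Jacobi identity (i.e. is a Poisson bracket) if and only if the Jacobi structure equations hold: (i) Λ(Λ(f,g),h) + Λ(Λ(g,h),f) + Λ(Λ(h,f),g) = R(f)·Λ(g,h) + R(g)·Λ(h,f) + R(h)·Λ(f,g) for all f, g, h ∈ A, and (ii) R(Λ(f,g)) = Λ(R(f),g) + Λ(f,R(g)) for all f, g ∈ A. (This is the algebraic form of the equivalence, via Proposition 3.3 and the commuting diagram of Theorem 4.5, between (Λ, R) being a Jacobi structure and its Poissonization e^{−t}(Λ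 + ∂/∂t ∧ R) being a Poisson structure on M × ℝ.) -/
/-- The Poissonization bracket `{·,·}_P` on the Laurent polynomial ring
`A[u,u⁻¹]` (determined by ℝ-bilinearity and
`{f·uᵐ, g·uᵏ}_P = (Λ(f,g) + m·f·R(g) − k·R(f)·g)·u^{m+k−1}`)
is alternating and a derivation in each argument, and it satisfies the
Jacobi identity iff the Jacobi structure equations hold for `(Λ, R)`. -/
theorem poissonization_bracket_poisson_iff_jacobi
    (A : Type*) [CommRing A] [Algebra ℝ A]
    (Λ : A →ₗ[ℝ] A →ₗ[ℝ] A) (hΛ0 : ∀ f : A, Λ f f = 0)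
    (hΛd : ∀ f g h : A, Λ f (g * h) = g * Λ f h + h * Λ f g)
    (R : A →ₗ[ℝ] A) (hR : ∀ f g : A, R (f * g) = f * R g + g * R f)
    (P : LaurentPolynomial A → LaurentPolynomial A → LaurentPolynomial A)
    (hPadd1 : ∀ p q r, P (p + q) r = P p r + P q r)
    (hPadd2 : ∀ p q r, P p (q + r) = P p q + P p r)
    (hPsmul1 : ∀ (c : ℝ) p q, P (c • p) q = c • P p q)
    (hPsmul2 : ∀ (c : ℝ) p q, P p (c • q) = c • P p q)
    (hPmono : ∀ (f g : A) (m k : ℤ),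
      P (LaurentPolynomial.C f * LaurentPolynomial.T m)
        (LaurentPolynomial.C g * LaurentPolynomial.T k) =
      LaurentPolynomial.C (Λ f g + m • (f * R g) - k • (R f * g)) *
        LaurentPolynomial.T (m + k - 1)) :
    (∀ p, P p p = 0) ∧
    (∀ p q r, P p (q * r) = q * P p r + r * P p q) ∧
    ((∀ p q r, P p (P q r) + P q (P r p) + P r (P p q) = 0) ↔
      ((∀ f g h : A,
          Λ (Λ f g) h + Λ (Λ g h) f + Λ (Λ h f) g =
            R f * Λ g h + R g * Λ h f + R h * Λ f g) ∧
       (∀ f g : A, R (Λ f g) = Λ (R f) g + Λ f (R g)))) := by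
  classical
  open LaurentPolynomial in
  -- antisymmetry of Λ
  have hΛanti : ∀ f g : A, Λ g f = -Λ f g := by
    intro f g
    have h := hΛ0 (f + g)
    simp only [map_add, LinearMap.add_apply, hΛ0, zero_add, add_zero] at h
    linear_combination h
  -- P vanishes on 0
  have hP01 : ∀ q, P 0 q = 0 := by
    intro q
    have h := hPadd1 0 0 q
    rw [add_zero] at h
    exact (add_eq_right.mp h.symm)
  -- antisymmetry of P
  have hPanti : ∀ p q, P q p = -P p q := by
    intro p q
    induction p using LaurentPolynomial.induction_on' with
    | add p₁ p₂ h1 h2 => rw [hPadd2, hPadd1, h1, h2, neg_add]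
    | C_mul_T n a =>
      induction q using LaurentPolynomial.induction_on' with
      | add q₁ q₂ h1 h2 => rw [hPadd1, hPadd2, h1, h2, neg_add]
      | C_mul_T m b =>
        rw [hPmono, hPmono, ← neg_mul, ← map_neg,
          show n + m - 1 = m + n - 1 from by ring]
        congr 2
        simp only [zsmul_eq_mul]
        linear_combination hΛanti a b
  -- alternating
  have alt : ∀ p, P p p = 0 := by
    intro p
    have h := hPanti p p
    have h2 : P p p + P p p = 0 := by nth_rewrite 1 [h]; exact neg_add_cancel _
    calc P p p = (2⁻¹ : ℝ) • ((2:ℝ) • P p p) := by rw [smul_smul]; norm_num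
    _ = (2⁻¹:ℝ) • 0 := by rw [two_smul, h2]
    _ = 0 := smul_zero _
  -- product of monomials
  have hmul : ∀ (x y : A) (i j : ℤ),
      (LaurentPolynomial.C x * LaurentPolynomial.T i) *
        (LaurentPolynomial.C y * LaurentPolynomial.T j) =
      LaurentPolynomial.C (x * y) * LaurentPolynomial.T (i + j) := by
    intro x y i j
    rw [LaurentPolynomial.T_add, map_mul]
    ring
  -- Leibniz rule
  have leib : ∀ p q r, P p (q * r) = q * P p r + r * P p q := by
    intro p q r
    induction p using LaurentPolynomial.induction_on' with
    | add p₁ p₂ h1 h2 => rw [hPadd1, h1, h2, hPadd1, hPadd1]; ring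
    | C_mul_T n a =>
      induction q using LaurentPolynomial.induction_on' with
      | add q₁ q₂ h1 h2 => rw [add_mul, hPadd2, h1, h2, hPadd2]; ring
      | C_mul_T m b =>
        induction r using LaurentPolynomial.induction_on' with
        | add r₁ r₂ h1 h2 => rw [mul_add, hPadd2, h1, h2, hPadd2]; ring
        | C_mul_T k c =>
          rw [hmul, hPmono, hPmono, hPmono, hmul, hmul,
            show m + (n + k - 1) = n + (m + k) - 1 from by ring,
            show k + (n + m - 1) = n + (m + k) - 1 from by ring,
            ← add_mul, ← map_add]
          congr 2
          simp only [hΛd, hR, zsmul_eq_mul]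
          push_cast
          ring
  have hR1 : R 1 = 0 := by
    have h := hR 1 1
    simp only [mul_one, one_mul] at h
    exact (add_eq_right.mp h.symm)
  have hΛ1 : ∀ f : A, Λ f 1 = 0 := by
    intro f
    have h := hΛd f 1 1
    simp only [mul_one, one_mul] at h
    exact (add_eq_right.mp h.symm)
  have hΛ1' : ∀ f : A, Λ 1 f = 0 := by
    intro f; rw [hΛanti f 1, hΛ1, neg_zero]
  have hCT0 : ∀ (x : A) (n : ℤ),
      LaurentPolynomial.C x * LaurentPolynomial.T n = 0 → x = 0 := by
    intro x n h
    have h2 : LaurentPolynomial.C x *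
        (LaurentPolynomial.T n * LaurentPolynomial.T (-n)) = 0 := by
      rw [← mul_assoc, h, zero_mul]
    rw [← LaurentPolynomial.T_add, add_neg_cancel, LaurentPolynomial.T_zero,
      mul_one, ← LaurentPolynomial.single_eq_C] at h2
    exact AddMonoidAlgebra.single_eq_zero.mp h2
  -- the Jacobi sum on monomials
  have jac_mono : ∀ (a b c : A) (i j k : ℤ),
      P (LaurentPolynomial.C a * LaurentPolynomial.T i)
          (P (LaurentPolynomial.C b * LaurentPolynomial.T j)
            (LaurentPolynomial.C c * LaurentPolynomial.T k)) +
      P (LaurentPolynomial.C b * LaurentPolynomial.T j)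
          (P (LaurentPolynomial.C c * LaurentPolynomial.T k)
            (LaurentPolynomial.C a * LaurentPolynomial.T i)) +
      P (LaurentPolynomial.C c * LaurentPolynomial.T k)
          (P (LaurentPolynomial.C a * LaurentPolynomial.T i)
            (LaurentPolynomial.C b * LaurentPolynomial.T j)) =
      LaurentPolynomial.C
        ((Λ a (Λ b c + j • (b * R c) - k • (R b * c))
            + i • (a * R (Λ b c + j • (b * R c) - k • (R b * c)))
            - (j + k - 1) • (R a * (Λ b c + j • (b * R c) - k • (R b * c)))) +
         (Λ b (Λ c a + k • (c * R a) - i • (R c * a))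
            + j • (b * R (Λ c a + k • (c * R a) - i • (R c * a)))
            - (k + i - 1) • (R b * (Λ c a + k • (c * R a) - i • (R c * a)))) +
         (Λ c (Λ a b + i • (a * R b) - j • (R a * b))
            + k • (c * R (Λ a b + i • (a * R b) - j • (R a * b)))
            - (i + j - 1) • (R c * (Λ a b + i • (a * R b) - j • (R a * b))))) *
        LaurentPolynomial.T (i + j + k - 2) := by
    intro a b c i j k
    rw [hPmono, hPmono, hPmono, hPmono, hPmono, hPmono,
      show i + (j + k - 1) - 1 = i + j + k - 2 from by ring,
      show j + (k + i - 1) - 1 = i + j + k - 2 from by ring,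
      show k + (i + j - 1) - 1 = i + j + k - 2 from by ring,
      ← add_mul, ← add_mul, ← map_add, ← map_add]
  refine ⟨alt, leib, ?_⟩
  constructor
  · intro HJ
    constructor
    · intro f g h
      have j := HJ (LaurentPolynomial.C f * LaurentPolynomial.T 0)
        (LaurentPolynomial.C g * LaurentPolynomial.T 0)
        (LaurentPolynomial.C h * LaurentPolynomial.T 0)
      rw [jac_mono] at j
      have E := hCT0 _ _ j
      simp only [zero_smul, add_zero, sub_zero] at E
      norm_num at E
      linear_combination hΛanti h (Λ f g) + hΛanti f (Λ g h) + hΛanti g (Λ h f) - E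
    · intro f g
      have j := HJ (LaurentPolynomial.C 1 * LaurentPolynomial.T 1)
        (LaurentPolynomial.C f * LaurentPolynomial.T 0)
        (LaurentPolynomial.C g * LaurentPolynomial.T 0)
      rw [jac_mono] at j
      have E := hCT0 _ _ j
      simp only [zero_smul, add_zero, sub_zero, one_smul, hR1, hΛ1, hΛ1',
        zero_mul, mul_zero, one_mul, mul_one, zero_add, zero_sub, neg_smul,
        smul_neg, sub_neg_eq_add, map_neg, map_zero] at E
      norm_num at E
      linear_combination E - hΛanti g (R f)
  · rintro ⟨h1, h2⟩ p q r
    induction p using LaurentPolynomial.induction_on' with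
    | add p₁ p₂ hp1 hp2 =>
      simp only [hPadd1, hPadd2]
      linear_combination hp1 + hp2
    | C_mul_T i a =>
      induction q using LaurentPolynomial.induction_on' with
      | add q₁ q₂ hq1 hq2 =>
        simp only [hPadd1, hPadd2]
        linear_combination hq1 + hq2
      | C_mul_T j b =>
        induction r using LaurentPolynomial.induction_on' with
        | add r₁ r₂ hr1 hr2 =>
          simp only [hPadd1, hPadd2]
          linear_combination hr1 + hr2
        | C_mul_T k c =>
          rw [jac_mono]
          have hzero : ∀ (x : A) (n : ℤ), x = 0 →
              LaurentPolynomial.C x * LaurentPolynomial.T n = 0 := by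
            intro x n hx; rw [hx, map_zero, zero_mul]
          refine hzero _ _ ?_
          simp only [map_add, map_sub, map_zsmul, hΛd, hR, h2,
            hΛanti (Λ b c) a, hΛanti (Λ c a) b, hΛanti (Λ a b) c,
            hΛanti a b, hΛanti b c, hΛanti c a,
            hΛanti c (R b), hΛanti a (R c), hΛanti b (R a)]
          simp only [zsmul_eq_mul]
          push_cast
          linear_combination (-1 : A) * h1 a b c
end

section
/- Let {·,·} be an ℝ-bilinear alternating bracket on A. Then {·,·} satisfies the first-order Leibniz identity {f, gh} = g·{f,h} + h·{f,g} − gh·{f,1} for all f, g, h ∈ A if and only if there exist an alternating biderivation Λ on A and a derivation R of A such that {f,g} = Λ(f,g) + f·R(g) − g·R(f) for all f, g. In that case Λ and R are uniquely determined, namely R(f) = −{f,1} and Λ(f,g) = {f,g} − f·R(g) + g·R(f). (This is the algebraic content of the equivalence, used throughout the paper, between Lichnerowicz's formulation of Jacobi-type brackets via a pair (Λ, R) and Kirillov's formulation via brackets on functions given by first-order operators.) -/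
/-- An ℝ-bilinear alternating bracket on `A` satisfies the first-order
Leibniz identity `{f, gh} = g·{f,h} + h·{f,g} − gh·{f,1}` iff it is of the
form `{f,g} = Λ(f,g) + f·R(g) − g·R(f)` for an alternating biderivation `Λ`
and a derivation `R`; in that case `Λ` and `R` are uniquely determined, with
`R(f) = −{f,1}` and `Λ(f,g) = {f,g} − f·R(g) + g·R(f)`. -/
theorem first_order_bracket_iff_jacobi_pair
    (A : Type*) [CommRing A] [Algebra ℝ A]
    (b : A →ₗ[ℝ] A →ₗ[ℝ] A) (hb0 : ∀ f : A, b f f = 0) :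
    ((∀ f g h : A, b f (g * h) = g * b f h + h * b f g - (g * h) * b f 1) ↔
      ∃ (Λ : A →ₗ[ℝ] A →ₗ[ℝ] A) (R : A →ₗ[ℝ] A),
        (∀ f : A, Λ f f = 0) ∧
        (∀ f g h : A, Λ f (g * h) = g * Λ f h + h * Λ f g) ∧
        (∀ f g : A, R (f * g) = f * R g + g * R f) ∧
        (∀ f g : A, b f g = Λ f g + f * R g - g * R f)) ∧
    (∀ (Λ : A →ₗ[ℝ] A →ₗ[ℝ] A) (R : A →ₗ[ℝ] A),
      (∀ f : A, Λ f f = 0) →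
      (∀ f g h : A, Λ f (g * h) = g * Λ f h + h * Λ f g) →
      (∀ f g : A, R (f * g) = f * R g + g * R f) →
      (∀ f g : A, b f g = Λ f g + f * R g - g * R f) →
      (∀ f : A, R f = -(b f 1)) ∧
      (∀ f g : A, Λ f g = b f g - f * R g + g * R f)) := by
  have hskew : ∀ f g : A, b f g = - b g f := by
    intro f g
    have h := hb0 (f + g)
    simp only [map_add, LinearMap.add_apply, hb0] at h
    linear_combination h
  constructor
  · constructor
    · intro hL
      have hmul1 : ∀ g h : A, b (g * h) 1 = g * b h 1 + h * b g 1 := by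
        intro g h
        linear_combination hskew (g * h) 1 - hL 1 g h - g * hskew 1 h -
          h * hskew 1 g + (g * h) * hb0 1
      refine ⟨LinearMap.mk₂ ℝ (fun f g => b f g + f * b g 1 - g * b f 1)
        ?_ ?_ ?_ ?_, -(b.flip 1), ?_, ?_, ?_, ?_⟩
      · intro f f' g
        simp only [map_add, LinearMap.add_apply]
        ring
      · intro c f g
        simp only [map_smul, LinearMap.smul_apply]
        simp only [Algebra.smul_def]
        ring
      · intro f g g'
        simp only [map_add, LinearMap.add_apply]
        ring
      · intro c f g
        simp only [map_smul, LinearMap.smul_apply]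
        simp only [Algebra.smul_def]
        ring
      · intro f
        simp only [LinearMap.mk₂_apply]
        rw [hb0]
        ring
      · intro f g h
        simp only [LinearMap.mk₂_apply]
        rw [hL f g h, hmul1 g h]
        ring
      · intro f g
        simp only [LinearMap.neg_apply, LinearMap.flip_apply]
        rw [hmul1 f g]
        ring
      · intro f g
        simp only [LinearMap.mk₂_apply, LinearMap.neg_apply, LinearMap.flip_apply]
        ring
    · rintro ⟨Λ, R, hΛ0, hΛd, hRd, hbr⟩ f g h
      have hR1 : R 1 = 0 := by
        have := hRd 1 1
        simp only [mul_one, one_mul] at this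
        linear_combination -this
      have hΛ1 : ∀ f : A, Λ f 1 = 0 := by
        intro f
        have := hΛd f 1 1
        simp only [mul_one, one_mul] at this
        linear_combination -this
      rw [hbr f (g * h), hbr f g, hbr f h, hbr f 1, hΛd f g h, hRd g h, hΛ1, hR1]
      ring
  · intro Λ R hΛ0 hΛd hRd hbr
    have hR1 : R 1 = 0 := by
      have := hRd 1 1
      simp only [mul_one, one_mul] at this
      linear_combination -this
    have hΛ1 : ∀ f : A, Λ f 1 = 0 := by
      intro f
      have := hΛd f 1 1
      simp only [mul_one, one_mul] at this
      linear_combination -this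
    constructor
    · intro f
      rw [hbr f 1, hΛ1, hR1]
      ring
    · intro f g
      rw [hbr f g]
      ring
end
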